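/- There exist 37 points p₁, …, p₃₇ in the unit square [0,1]² ⊆ ℝ² such that ‖pᵢ − pⱼ‖ ≥ 0.196 for all i ≠ j. -/

import Mathlib

/-- x-coordinates (scaled by 10000) of 37 points in the unit square. -/
def packX : Fin 37 → ℤ := ![5000, 0, 0, 0, 6661, 0, 10000, 5005, 1699, 1642, 0, 10000, 3141, 1962, 8316, 4271, 8123, 8034, 6848, 10000, 3395, 8343, 1752, 6234, 0, 8279, 3981, 10000, 1962, 10000, 4813, 6575, 10000, 6495, 5944, 3487, 3117]
/-- y-coordinates (scaled by 10000) of 37 points in the unit square. -/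
def packY : Fin 37 → ℤ := ![7599, 0, 8036, 5887, 1915, 10000, 3976, 5052, 2943, 6961, 1962, 8038, 8227, 9882, 2969, 0, 583, 10000, 8259, 10000, 3930, 6988, 5002, 0, 3924, 4980, 10000, 0, 0, 5938, 2574, 3875, 1962, 6328, 10000, 6296, 1587]

set_option maxRecDepth 100000 in
lemma packX_mem : ∀ i, 0 ≤ packX i ∧ packX i ≤ 10000 := by decide

set_option maxRecDepth 100000 in
lemma packY_mem : ∀ i, 0 ≤ packY i ∧ packY i ≤ 10000 := by decide

set_option maxRecDepth 100000 in
lemma pack_key : ∀ i j : Fin 37, i ≠ j →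
    3841600 ≤ (packX i - packX j)^2 + (packY i - packY j)^2 := by decide

/-- There exist 37 points in the unit square `[0,1]²` with all pairwise
Euclidean distances at least 0.196 (point-spreading form of the improved
packing of 37 equal disks in a square). -/
theorem packing_37_disks :
    ∃ p : Fin 37 → EuclideanSpace ℝ (Fin 2),
      (∀ i, ∀ t : Fin 2, p i t ∈ Set.Icc (0 : ℝ) 1) ∧
      ∀ i j, i ≠ j → (0.196 : ℝ) ≤ ‖p i - p j‖ := by
  refine ⟨fun i => !₂[(packX i : ℝ)/10000, (packY i : ℝ)/10000], ?_, ?_⟩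
  · intro i t
    have hx := packX_mem i; have hy := packY_mem i
    have hx0 : (0:ℝ) ≤ packX i := by exact_mod_cast hx.1
    have hx1 : (packX i:ℝ) ≤ 10000 := by exact_mod_cast hx.2
    have hy0 : (0:ℝ) ≤ packY i := by exact_mod_cast hy.1
    have hy1 : (packY i:ℝ) ≤ 10000 := by exact_mod_cast hy.2
    fin_cases t <;> simp <;> constructor
    · positivity
    · rw [div_le_one (by norm_num)]; linarith
    · positivity
    · rw [div_le_one (by norm_num)]; linarith
  · intro i j hij
    rw [EuclideanSpace.norm_eq]
    rw [show (0.196:ℝ) = Real.sqrt (0.196^2) by rw [Real.sqrt_sq]; norm_num]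
    apply Real.sqrt_le_sqrt
    have h := pack_key i j hij
    have hx : ((packX i - packX j : ℤ) : ℝ)^2 + ((packY i - packY j : ℤ) : ℝ)^2 ≥ 3841600 := by
      exact_mod_cast h
    simp only [Fin.sum_univ_two]
    push_cast at hx ⊢
    simp only [Matrix.cons_val_zero, Matrix.cons_val_one, Matrix.head_cons, PiLp.sub_apply,
      Real.norm_eq_abs, sq_abs]
    rw [div_sub_div_same, div_sub_div_same, div_pow, div_pow, ← add_div,
      le_div_iff₀ (by norm_num)]
    nlinarith [hx]
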